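/- Suppose there are n+1 action profiles a_0, a_1, …, a_n with R_{a_0} = c_{a_0} = 0, sorted so that for each i the breakpoint α_{i,i+1} = (c_{a_{i+1}} − c_{a_i})/(R_{a_{i+1}} − R_{a_i}) lies in [0,1] and R_{a_i} < R_{a_{i+1}}, and suppose the principal can, for each i, achieve profit at least (1 − α_{i,i+1}) R_{a_{i+1}} with some contract. Then the maximal welfare max_i (R_{a_i} − c_{a_i}) = R_{a_n} − c_{a_n} is at most n times the principal's optimal profit. -/

import Mathlib

/-- If the `n+1` action profiles `a_0, …, a_n` (with `R_{a_0} = c_{a_0} = 0`) are sorted so that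
each breakpoint `α_{i,i+1}` lies in `[0,1]` and rewards are increasing, and the principal's
optimal profit `OPT` is at least `(1 − α_{i,i+1}) R_{a_{i+1}}` for each `i`, then the maximal
welfare `R_{a_n} − c_{a_n}` is at most `n · OPT`. -/
theorem welfare_le_breakpoints_mul_opt
    (n : ℕ) (R c : ℕ → ℝ) (OPT : ℝ)
    (hR0 : R 0 = 0) (hc0 : c 0 = 0)
    (hmono : ∀ i < n, R i < R (i + 1))
    (hbp : ∀ i < n, 0 ≤ (c (i + 1) - c i) / (R (i + 1) - R i) ∧
      (c (i + 1) - c i) / (R (i + 1) - R i) ≤ 1)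
    (hOPT : ∀ i < n, (1 - (c (i + 1) - c i) / (R (i + 1) - R i)) * R (i + 1) ≤ OPT)
    (hmax : ∀ i ≤ n, R i - c i ≤ R n - c n) :
    R n - c n ≤ n * OPT := by
  have hRpos : ∀ i ≤ n, 0 ≤ R i := by
    intro i hi
    induction i with
    | zero => simp [hR0]
    | succ k ih =>
      have hk : k < n := Nat.lt_of_succ_le hi
      exact le_of_lt (lt_of_le_of_lt (ih (le_of_lt hk)) (hmono k hk))
  have key : ∀ i ≤ n, R i - c i ≤ i * OPT := by
    intro i hi
    induction i with
    | zero => simp [hR0, hc0]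
    | succ k ih =>
      have hk : k < n := Nat.lt_of_succ_le hi
      have ihk := ih (le_of_lt hk)
      set α := (c (k + 1) - c k) / (R (k + 1) - R k) with hα
      have hne : R (k + 1) - R k ≠ 0 := ne_of_gt (sub_pos.mpr (hmono k hk))
      have hmul : α * (R (k + 1) - R k) = c (k + 1) - c k := by
        rw [hα, div_mul_cancel₀ _ hne]
      have h1 : (1 - α) * (R (k + 1) - R k) ≤ (1 - α) * R (k + 1) := by
        apply mul_le_mul_of_nonneg_left _ (sub_nonneg.mpr (hbp k hk).2)
        nlinarith [hRpos k (le_of_lt hk)]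
      have h2 : (1 - α) * (R (k + 1) - R k)
          = (R (k + 1) - c (k + 1)) - (R k - c k) := by
        rw [sub_mul, one_mul, hmul]; ring
      have h3 := hOPT k hk
      push_cast
      nlinarith
  exact le_of_le_of_eq (key n le_rfl) (by push_cast; ring) |>.trans_eq rfl
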